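/- arXiv:1503.02932 — 3 statements merged into one kernel-verified Lean document; each statement's English description precedes it below -/
import Mathlib

section
/- For a prime p and positive integers r, m, with q = p^r, any two quotient rings Z_{p^m}[X]/(f) and Z_{p^m}[X]/(g), where f and g are monic polynomials of degree r over Z_{p^m} that are irreducible modulo p, are isomorphic as rings. -/
open Polynomial in
lemma isAdicComplete_of_pow_eq_bot {R : Type*} [CommRing R] (I : Ideal R) (n : ℕ)
    (h : I ^ n = ⊥) : IsAdicComplete I R := by
  have hsmul : ∀ k : ℕ, (I ^ k • ⊤ : Submodule R R) = I ^ k := fun k => by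
    rw [smul_eq_mul, Ideal.mul_top]
  refine { toIsHausdorff := ⟨fun x hx => ?_⟩, toIsPrecomplete := ⟨fun f hf => ?_⟩ }
  · have := hx n
    rw [SModEq.zero, hsmul, h] at this
    simpa using this
  · refine ⟨f n, fun k => ?_⟩
    rcases le_total k n with hk | hk
    · simpa [hsmul] using hf hk
    · have := hf hk
      rw [hsmul, h, SModEq.bot] at this
      rw [this]

open Polynomial

set_option maxHeartbeats 1000000 in
/-- Well-definedness of the Galois ring GR(q^m, p^m): any two quotients
`Z_{p^m}[X]/(f)` and `Z_{p^m}[X]/(g)` with `f, g` monic of degree `r` and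
irreducible modulo `p` are isomorphic as rings. -/
theorem galois_ring_well_defined (p r m : ℕ) (hp : p.Prime) (hr : 0 < r) (hm : 0 < m)
    (f g : (ZMod (p ^ m))[X]) (hf : f.Monic) (hg : g.Monic)
    (hfd : f.natDegree = r) (hgd : g.natDegree = r)
    (hfi : Irreducible (f.map (ZMod.castHom (dvd_pow_self p hm.ne') (ZMod p))))
    (hgi : Irreducible (g.map (ZMod.castHom (dvd_pow_self p hm.ne') (ZMod p)))) :
    Nonempty (((ZMod (p ^ m))[X] ⧸ Ideal.span {f}) ≃+* ((ZMod (p ^ m))[X] ⧸ Ideal.span {g})) := by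
  haveI : Fact p.Prime := ⟨hp⟩
  haveI : NeZero (p ^ m) := ⟨pow_ne_zero m hp.ne_zero⟩
  set R := ZMod (p ^ m)
  set c : R →+* ZMod p := ZMod.castHom (dvd_pow_self p hm.ne') (ZMod p) with hc
  set A := AdjoinRoot f with hA
  set B := AdjoinRoot g with hB
  set fb := f.map c with hfb
  set gb := g.map c with hgb
  haveI : Fact (Irreducible fb) := ⟨hfi⟩
  haveI : Fact (Irreducible gb) := ⟨hgi⟩
  set Kf := AdjoinRoot fb with hKf
  set Kg := AdjoinRoot gb with hKg
  -- the ideal J = (p) in B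
  set J : Ideal B := Ideal.span {(p : B)} with hJ
  have hpB : (p : B) ^ m = 0 := by
    have h1 : (p : B) = AdjoinRoot.of g (p : R) := by simp
    rw [h1, ← map_pow]
    have : ((p : R)) ^ m = ((p ^ m : ℕ) : R) := by push_cast; ring
    rw [this, ZMod.natCast_self, map_zero]
  have hJpow : ∀ k : ℕ, J ^ k = Ideal.span {(p : B) ^ k} := fun k =>
    Ideal.span_singleton_pow _ _
  have hJm : J ^ m = ⊥ := by
    rw [hJpow, hpB, Ideal.span_singleton_eq_bot]
  haveI : IsAdicComplete J B := isAdicComplete_of_pow_eq_bot J m hJm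
  haveI hHen : HenselianRing B J := inferInstance
  -- the ideal (p) in R and the identification R/(p) ≃ ZMod p
  set I0 : Ideal R := Ideal.span {(p : R)} with hI0
  have hkerc : RingHom.ker c = I0 := by
    ext x
    rw [RingHom.mem_ker, hI0, Ideal.mem_span_singleton]
    constructor
    · intro hx
      have hcx : c x = ((x.val : ℕ) : ZMod p) := by
        rw [hc, ZMod.castHom_apply, ZMod.cast_eq_val]
      have hx' : ((x.val : ℕ) : ZMod p) = 0 := by rw [← hcx]; exact hx
      obtain ⟨t, ht⟩ := (ZMod.natCast_eq_zero_iff _ _).mp hx'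
      refine ⟨(t : R), ?_⟩
      have : ((x.val : ℕ) : R) = x := by
        rw [ZMod.natCast_val]; exact ZMod.cast_id _ x
      rw [← this, ht]; exact Nat.cast_mul _ _
    · rintro ⟨y, rfl⟩
      rw [map_mul]
      have : c (p : R) = 0 := by
        rw [map_natCast, ZMod.natCast_self]
      rw [this, zero_mul]
  have csurj : Function.Surjective c := ZMod.ringHom_surjective c
  set d : (R ⧸ I0) ≃+* ZMod p :=
    (Ideal.quotEquivOfEq hkerc.symm).trans (RingHom.quotientKerEquivOfSurjective csurj) with hd
  have hdmk : ∀ x : R, d (Ideal.Quotient.mk I0 x) = c x := fun x => by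
    rw [hd]
    simp only [RingEquiv.trans_apply, Ideal.quotEquivOfEq_mk]
    exact RingHom.kerLift_mk c x
  -- the isomorphism B/J ≃ Kg
  have hmapJ : I0.map (AdjoinRoot.of g) = J := by
    rw [hI0, Ideal.map_span, Set.image_singleton, hJ, map_natCast]
  set e1 : (B ⧸ J) ≃+* (B ⧸ I0.map (AdjoinRoot.of g)) := Ideal.quotEquivOfEq hmapJ.symm with he1
  set e2 := AdjoinRoot.quotAdjoinRootEquivQuotPolynomialQuot I0 g with he2
  have hspan : Ideal.span {gb} =
      (Ideal.span ({g.map (Ideal.Quotient.mk I0)} : Set (R ⧸ I0)[X])).map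
        (Polynomial.mapEquiv d : (R ⧸ I0)[X] →+* (ZMod p)[X]) := by
    have hme : (Polynomial.mapEquiv d : (R ⧸ I0)[X] →+* (ZMod p)[X])
        (g.map (Ideal.Quotient.mk I0)) = gb := by
      show (g.map (Ideal.Quotient.mk I0)).map (d : (R ⧸ I0) →+* ZMod p) = gb
      rw [Polynomial.map_map, hgb]
      congr 1
    rw [Ideal.map_span, Set.image_singleton, hme]
  set e3 : ((R ⧸ I0)[X] ⧸ Ideal.span ({g.map (Ideal.Quotient.mk I0)} : Set (R ⧸ I0)[X])) ≃+*
      ((ZMod p)[X] ⧸ Ideal.span ({gb} : Set (ZMod p)[X])) :=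
    Ideal.quotientEquiv _ _ (Polynomial.mapEquiv d) hspan with he3
  set ρ : (B ⧸ J) ≃+* Kg := e1.trans (e2.trans e3) with hρ
  set π : B →+* Kg := (ρ : (B ⧸ J) →+* Kg).comp (Ideal.Quotient.mk J) with hπ
  have hπker : ∀ x : B, π x = 0 ↔ x ∈ J := fun x => by
    rw [← Ideal.Quotient.eq_zero_iff_mem (I := J)]
    constructor
    · intro h
      apply ρ.injective
      rw [map_zero]
      exact h
    · intro h
      show ρ (Ideal.Quotient.mk J x) = 0
      rw [h, map_zero]
  -- finiteness and cardinalities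
  letI : Fintype A := Module.fintypeOfFintype (AdjoinRoot.powerBasis' hf).basis
  letI : Fintype B := Module.fintypeOfFintype (AdjoinRoot.powerBasis' hg).basis
  letI : Fintype Kf := Module.fintypeOfFintype (AdjoinRoot.powerBasis' (hf.map c)).basis
  letI : Fintype Kg := Module.fintypeOfFintype (AdjoinRoot.powerBasis' (hg.map c)).basis
  have cardA : Fintype.card A = (p ^ m) ^ r := by
    rw [Module.card_fintype (AdjoinRoot.powerBasis' hf).basis, ZMod.card, Fintype.card_fin,
      AdjoinRoot.powerBasis'_dim, hfd]
  have cardB : Fintype.card B = (p ^ m) ^ r := by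
    rw [Module.card_fintype (AdjoinRoot.powerBasis' hg).basis, ZMod.card, Fintype.card_fin,
      AdjoinRoot.powerBasis'_dim, hgd]
  have cardKf : Fintype.card Kf = p ^ r := by
    rw [Module.card_fintype (AdjoinRoot.powerBasis' (hf.map c)).basis, ZMod.card,
      Fintype.card_fin, AdjoinRoot.powerBasis'_dim, hf.natDegree_map, hfd]
  have cardKg : Fintype.card Kg = p ^ r := by
    rw [Module.card_fintype (AdjoinRoot.powerBasis' (hg.map c)).basis, ZMod.card,
      Fintype.card_fin, AdjoinRoot.powerBasis'_dim, hg.natDegree_map, hgd]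
  -- the isomorphism of residue fields and the approximate root
  set e : Kf ≃ₐ[ZMod p] Kg :=
    FiniteField.algEquivOfCardEq p (cardKf.trans cardKg.symm) with he
  set b₀ : Kg := e (AdjoinRoot.root fb) with hb₀
  have hb₀root : aeval b₀ fb = 0 := by
    rw [hb₀, Polynomial.aeval_algHom_apply e (AdjoinRoot.root fb) fb,
      AdjoinRoot.aeval_eq, AdjoinRoot.mk_self, map_zero]
  -- key evaluation identity
  have keyev : ∀ (q : R[X]) (x : B),
      π ((q.map (algebraMap R B)).eval x) = aeval (π x) (q.map c) := by
    intro q x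
    rw [Polynomial.eval_map, Polynomial.hom_eval₂]
    have hcomp : π.comp (algebraMap R B) = (algebraMap (ZMod p) Kg).comp c :=
      Subsingleton.elim _ _
    rw [hcomp, Polynomial.aeval_def, Polynomial.eval₂_map]
  obtain ⟨a₀, ha₀⟩ : ∃ a₀ : B, π a₀ = b₀ := by
    obtain ⟨y, hy⟩ := Ideal.Quotient.mk_surjective (I := J) (ρ.symm b₀)
    exact ⟨y, by show ρ _ = b₀; rw [hy, RingEquiv.apply_symm_apply]⟩
  set F := f.map (algebraMap R B) with hF
  have hFm : F.Monic := hf.map _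
  have h1 : F.eval a₀ ∈ J := by
    rw [← hπker, hF, keyev f a₀, ha₀]
    exact hb₀root
  have hder : IsUnit (aeval b₀ (derivative fb)) := by
    have hsep : fb.Separable := PerfectField.separable_of_irreducible hfi
    obtain ⟨u, v, huv⟩ := hsep
    have h2 : aeval b₀ v * aeval b₀ (derivative fb) = 1 := by
      have h3 := congrArg (aeval b₀) huv
      rw [map_add, map_mul, map_mul, map_one, hb₀root, mul_zero, zero_add] at h3
      exact h3
    exact IsUnit.of_mul_eq_one _ (by rw [mul_comm]; exact h2)
  have h2 : IsUnit (Ideal.Quotient.mk J (F.derivative.eval a₀)) := by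
    have hπval : π (F.derivative.eval a₀) = aeval b₀ (derivative fb) := by
      rw [hF, Polynomial.derivative_map, keyev (derivative f) a₀, ha₀, hfb,
        Polynomial.derivative_map]
    have hmkρ : Ideal.Quotient.mk J (F.derivative.eval a₀) =
        ρ.symm (π (F.derivative.eval a₀)) := by
      show _ = ρ.symm (ρ _); rw [RingEquiv.symm_apply_apply]
    rw [hmkρ, hπval]
    exact hder.map ρ.symm.toRingHom
  obtain ⟨a, haroot, haa₀⟩ := hHen.is_henselian F hFm a₀ h1 h2
  have haeval : f.eval₂ (algebraMap R B) a = 0 := by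
    rw [Polynomial.eval₂_eq_eval_map]; exact haroot
  set φA : A →+* B := AdjoinRoot.lift (algebraMap R B) a haeval with hφA
  have hπa : π a = b₀ := by
    have h4 : π (a - a₀) = 0 := (hπker _).mpr haa₀
    rw [map_sub, sub_eq_zero] at h4
    rw [h4, ha₀]
  have hsurjres : ∀ y : Kg, ∃ u : A, π (φA u) = y := by
    intro y
    obtain ⟨z, hz⟩ := AdjoinRoot.mk_surjective (e.symm y)
    obtain ⟨q, hq⟩ := Polynomial.map_surjective c csurj z
    refine ⟨AdjoinRoot.mk f q, ?_⟩
    rw [hφA, AdjoinRoot.lift_mk, Polynomial.eval₂_eq_eval_map, keyev q a, hπa, hq]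
    rw [← AdjoinRoot.aeval_eq] at hz
    rw [hb₀, Polynomial.aeval_algHom_apply e (AdjoinRoot.root fb) z, hz,
      AlgEquiv.apply_symm_apply]
  have keyJ : ∀ x : B, ∃ u : A, x - φA u ∈ J := by
    intro x
    obtain ⟨u, hu⟩ := hsurjres (π x)
    refine ⟨u, (hπker _).mp ?_⟩
    rw [map_sub, hu, sub_self]
  have main : ∀ n : ℕ, ∀ x : B, ∃ u : A, x - φA u ∈ J ^ n := by
    intro n
    induction n with
    | zero => intro x; exact ⟨0, by simp⟩
    | succ n ih =>
      intro x
      obtain ⟨u, hu⟩ := ih x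
      rw [hJpow, Ideal.mem_span_singleton] at hu
      obtain ⟨y, hy⟩ := hu
      obtain ⟨w, hw⟩ := keyJ y
      rw [hJ, Ideal.mem_span_singleton] at hw
      obtain ⟨z, hz⟩ := hw
      refine ⟨u + (p : A) ^ n * w, ?_⟩
      rw [hJpow, Ideal.mem_span_singleton]
      refine ⟨z, ?_⟩
      rw [map_add, map_mul, map_pow, map_natCast]
      have h5 : x - (φA u + (p : B) ^ n * φA w) = (x - φA u) - (p : B) ^ n * φA w := by ring
      rw [h5, hy, ← mul_sub, hz, pow_succ]
      ring
  have hφAsurj : Function.Surjective φA := by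
    intro x
    obtain ⟨u, hu⟩ := main m x
    rw [hJm, Ideal.mem_bot, sub_eq_zero] at hu
    exact ⟨u, hu.symm⟩
  have hbij : Function.Bijective φA :=
    (Fintype.bijective_iff_surjective_and_card φA).mpr ⟨hφAsurj, cardA.trans cardB.symm⟩
  exact ⟨RingEquiv.ofBijective φA hbij⟩
end

section
/- Let R = GR(q^m, p^m) be a Galois ring with q = p^r. Then the number of free rank-1 submodules of the R-module R^3 equals (q^2 + q + 1) * q^{2(m-1)}. -/
open Polynomial

section General

variable {A : Type*} [CommRing A]

lemma eq_zero_of_mul_unit_eq_zero {a b : A} (hb : IsUnit b) (h : a * b = 0) : a = 0 := by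
  obtain ⟨u, rfl⟩ := hb
  calc a = a * u * ↑u⁻¹ := by rw [mul_assoc, Units.mul_inv, mul_one]
    _ = 0 := by rw [h, zero_mul]

/-- If `a • v = v` and some coordinate of `v` is a unit, then `a = 1`. -/
lemma smul_eq_self_unimodular {v : Fin 3 → A} {a : A} (hv : ∃ i, IsUnit (v i))
    (h : a • v = v) : a = 1 := by
  obtain ⟨i, hi⟩ := hv
  have h1 := congrFun h i
  simp only [Pi.smul_apply, smul_eq_mul] at h1
  have h2 : (a - 1) * v i = 0 := by linear_combination h1
  have := eq_zero_of_mul_unit_eq_zero hi h2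
  linear_combination this

lemma smul_eq_zero_unimodular {v : Fin 3 → A} {a : A} (hv : ∃ i, IsUnit (v i))
    (h : a • v = 0) : a = 0 := by
  obtain ⟨i, hi⟩ := hv
  have h1 := congrFun h i
  simp only [Pi.smul_apply, smul_eq_mul, Pi.zero_apply] at h1
  exact eq_zero_of_mul_unit_eq_zero hi h1

/-- If two unimodular vectors span the same submodule, they differ by a unit. -/
lemma exists_unit_smul_of_span_eq {v w : Fin 3 → A} (hv : ∃ i, IsUnit (v i))
    (h : Submodule.span A {w} = Submodule.span A {v}) :
    ∃ u : Aˣ, u • w = v := by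
  have hvw : v ∈ Submodule.span A {w} := h ▸ Submodule.mem_span_singleton_self v
  have hwv : w ∈ Submodule.span A {v} := h ▸ Submodule.mem_span_singleton_self w
  obtain ⟨a, rfl⟩ := Submodule.mem_span_singleton.mp hvw
  obtain ⟨b, hb⟩ := Submodule.mem_span_singleton.mp hwv
  have hab : (a * b) • (a • w) = a • w := by
    rw [mul_comm, mul_smul, smul_comm, hb]
  have h1 : a * b = 1 := smul_eq_self_unimodular hv hab
  refine ⟨⟨a, b, h1, by rw [mul_comm] at h1; exact h1⟩, rfl⟩

end General

section Char

variable {A : Type*} [CommRing A] [Nontrivial A]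

/-- Characterization of free rank-1 submodules of `A^3` over a ring whose
nonunits lie in a nilpotent principal ideal. -/
lemma free_iff_span_unimodular {t : A} (ht : IsNilpotent t)
    (hloc : ∀ x : A, ¬IsUnit x → x ∈ Ideal.span {t})
    (S : Submodule A (Fin 3 → A)) :
    Nonempty (S ≃ₗ[A] A) ↔ ∃ v : Fin 3 → A, (∃ i, IsUnit (v i)) ∧ S = Submodule.span A {v} := by
  classical
  constructor
  · rintro ⟨e⟩
    set vS : S := e.symm 1 with hvS
    refine ⟨(vS : Fin 3 → A), ?_, ?_⟩
    · -- unimodular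
      by_contra hno
      push_neg at hno
      -- each coordinate is a multiple of t
      have hw : ∃ w : Fin 3 → A, (vS : Fin 3 → A) = t • w := by
        have : ∀ i, ∃ c : A, (vS : Fin 3 → A) i = t * c := by
          intro i
          obtain ⟨c, hc⟩ := Ideal.mem_span_singleton'.mp (hloc _ (hno i))
          exact ⟨c, by rw [← hc]; ring⟩
        choose w hwi using this
        exact ⟨w, funext fun i => by rw [Pi.smul_apply, smul_eq_mul, hwi i]⟩
      obtain ⟨w, hw⟩ := hw
      -- minimal n with t^n = 0
      obtain ⟨n, hn⟩ := ht
      have hne : ∃ n, t ^ n = 0 := ⟨n, hn⟩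
      set k := Nat.find hne with hk
      have hk0 : t ^ k = 0 := Nat.find_spec hne
      have hkpos : 0 < k := by
        rcases Nat.eq_zero_or_pos k with h0 | h
        · exfalso; rw [h0, pow_zero] at hk0; exact one_ne_zero hk0
        · exact h
      have hk1 : t ^ (k - 1) ≠ 0 := Nat.find_min hne (by omega)
      -- t^(k-1) • vS = 0 in A^3
      have hz : t ^ (k - 1) • (vS : Fin 3 → A) = 0 := by
        rw [hw, smul_smul, ← pow_succ, Nat.sub_add_cancel hkpos, hk0, zero_smul]
      have hz' : (t ^ (k - 1) • vS : S) = 0 := by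
        apply Subtype.ext
        simpa using hz
      -- but vS = e.symm 1, so t^(k-1) = 0
      have : t ^ (k - 1) = 0 := by
        have := congrArg e hz'
        rw [map_smul, map_zero, hvS, e.apply_symm_apply, smul_eq_mul, mul_one] at this
        exact this
      exact hk1 this
    · -- S = span of vS
      apply le_antisymm
      · intro s hs
        have : (⟨s, hs⟩ : S) = e (⟨s, hs⟩ : S) • vS := by
          rw [hvS, ← map_smul, smul_eq_mul, mul_one, e.symm_apply_apply]
        refine Submodule.mem_span_singleton.mpr ⟨e ⟨s, hs⟩, ?_⟩
        exact congrArg Subtype.val this.symm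
      · rw [Submodule.span_singleton_le_iff_mem]
        exact vS.2
  · rintro ⟨v, hv, rfl⟩
    have hinj : Function.Injective (LinearMap.toSpanSingleton A (Fin 3 → A) v) := by
      intro a b hab
      have : (a - b) • v = 0 := by
        simp only [LinearMap.toSpanSingleton_apply] at hab
        rw [sub_smul, hab, sub_self]
      have := smul_eq_zero_unimodular hv this
      linear_combination this
    rw [LinearMap.span_singleton_eq_range]
    exact ⟨(LinearEquiv.ofInjective _ hinj).symm⟩

end Char

section Count

variable {A : Type*} [CommRing A] [Nontrivial A] [Finite A]

lemma card_free_mul_card_units {t : A} (ht : IsNilpotent t)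
    (hloc : ∀ x : A, ¬IsUnit x → x ∈ Ideal.span {t}) :
    Nat.card {S : Submodule A (Fin 3 → A) // Nonempty (S ≃ₗ[A] A)} * Nat.card Aˣ =
      Nat.card {v : Fin 3 → A // ∃ i, IsUnit (v i)} := by
  classical
  have key := fun (S : {S : Submodule A (Fin 3 → A) // Nonempty (S ≃ₗ[A] A)}) =>
    (free_iff_span_unimodular ht hloc S.1).mp S.2
  choose g hg1 hg2 using key
  let E : {S : Submodule A (Fin 3 → A) // Nonempty (S ≃ₗ[A] A)} × Aˣ →
      {v : Fin 3 → A // ∃ i, IsUnit (v i)} := fun x =>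
    ⟨(x.2 : A) • g x.1, by
      obtain ⟨i, hi⟩ := hg1 x.1
      exact ⟨i, by simpa using (x.2.isUnit.mul hi)⟩⟩
  have hbij : Function.Bijective E := by
    constructor
    · rintro ⟨S, u⟩ ⟨S', u'⟩ h
      have h' : (u : A) • g S = (u' : A) • g S' := congrArg Subtype.val h
      have hspan : Submodule.span A {(u : A) • g S} = Submodule.span A {(u' : A) • g S'} := by
        rw [h']
      rw [Submodule.span_singleton_smul_eq u.isUnit, Submodule.span_singleton_smul_eq u'.isUnit]
        at hspan
      have hSS' : S = S' := Subtype.ext (by rw [hg2 S, hg2 S', hspan])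
      subst hSS'
      have : ((u'⁻¹ : Aˣ) : A) • (u : A) • g S = g S := by
        rw [h', smul_smul, Units.inv_mul, one_smul]
      rw [smul_smul] at this
      have := smul_eq_self_unimodular (hg1 S) this
      have huu : (u : A) = (u' : A) := by
        calc (u : A) = ((u'⁻¹ : Aˣ) * u) * u' := by
              push_cast; rw [mul_comm ((u'⁻¹ : Aˣ) : A), mul_assoc, Units.inv_mul, mul_one]
          _ = (u' : A) := by rw [this, one_mul]
      exact Prod.ext rfl (Units.ext huu)
    · rintro ⟨v, hv⟩
      have hfree : Nonempty (Submodule.span A {v} ≃ₗ[A] A) :=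
        (free_iff_span_unimodular ht hloc _).mpr ⟨v, hv, rfl⟩
      set S : {S : Submodule A (Fin 3 → A) // Nonempty (S ≃ₗ[A] A)} := ⟨_, hfree⟩ with hS
      have hspan : Submodule.span A {g S} = Submodule.span A {v} := (hg2 S).symm
      obtain ⟨u, hu⟩ := exists_unit_smul_of_span_eq hv hspan
      exact ⟨⟨S, u⟩, Subtype.ext (by simpa [E, Units.smul_def] using hu)⟩
  calc Nat.card {S : Submodule A (Fin 3 → A) // Nonempty (S ≃ₗ[A] A)} * Nat.card Aˣ
      = Nat.card ({S : Submodule A (Fin 3 → A) // Nonempty (S ≃ₗ[A] A)} × Aˣ) :=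
        (Nat.card_prod _ _).symm
    _ = Nat.card {v : Fin 3 → A // ∃ i, IsUnit (v i)} := Nat.card_eq_of_bijective E hbij

end Count

section Cards

variable {A : Type*} [CommRing A] [Nontrivial A] [Finite A]

lemma not_isUnit_iff_mem {t : A} (ht : IsNilpotent t)
    (hloc : ∀ x : A, ¬IsUnit x → x ∈ Ideal.span {t}) (x : A) :
    ¬IsUnit x ↔ x ∈ Ideal.span {t} := by
  refine ⟨hloc x, fun hx hu => ?_⟩
  obtain ⟨c, hc⟩ := Ideal.mem_span_singleton'.mp hx
  have htu : IsUnit t := isUnit_of_mul_isUnit_right (hc ▸ hu)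
  obtain ⟨n, hn⟩ := ht
  exact not_isUnit_zero (hn ▸ htu.pow n)

lemma card_units_eq {t : A} (ht : IsNilpotent t)
    (hloc : ∀ x : A, ¬IsUnit x → x ∈ Ideal.span {t}) :
    Nat.card Aˣ = Nat.card A - Nat.card (Ideal.span {t} : Ideal A) := by
  classical
  have e1 : Aˣ ≃ {x : A // IsUnit x} :=
    (Submonoid.unitsTypeEquivIsUnitSubmonoid (M := A)).toEquiv.trans (Equiv.subtypeEquivRight (fun x => by
      simp [IsUnit.mem_submonoid_iff]))
  have e2 : {x : A // ¬IsUnit x} ≃ (Ideal.span {t} : Ideal A) :=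
    Equiv.subtypeEquivRight (fun x => not_isUnit_iff_mem ht hloc x)
  have hsum : Nat.card {x : A // IsUnit x} + Nat.card {x : A // ¬IsUnit x} = Nat.card A := by
    rw [← Nat.card_sum]
    exact Nat.card_eq_of_bijective _ (Equiv.sumCompl IsUnit).bijective
  rw [Nat.card_eq_of_bijective _ e1.bijective]
  rw [Nat.card_eq_of_bijective _ e2.bijective] at hsum
  omega

lemma card_unimodular_eq {t : A} (ht : IsNilpotent t)
    (hloc : ∀ x : A, ¬IsUnit x → x ∈ Ideal.span {t}) :
    Nat.card {v : Fin 3 → A // ∃ i, IsUnit (v i)} =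
      Nat.card A ^ 3 - Nat.card (Ideal.span {t} : Ideal A) ^ 3 := by
  classical
  have e2 : {v : Fin 3 → A // ¬∃ i, IsUnit (v i)} ≃ (Fin 3 → (Ideal.span {t} : Ideal A)) := by
    refine (Equiv.subtypeEquivRight (fun v => ?_)).trans (Equiv.subtypePiEquivPi)
    push_neg
    exact forall_congr' fun i => not_isUnit_iff_mem ht hloc (v i)
  have hsum : Nat.card {v : Fin 3 → A // ∃ i, IsUnit (v i)} +
      Nat.card {v : Fin 3 → A // ¬∃ i, IsUnit (v i)} = Nat.card (Fin 3 → A) := by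
    rw [← Nat.card_sum]
    exact Nat.card_eq_of_bijective _ (Equiv.sumCompl _).bijective
  have h1 : Nat.card (Fin 3 → A) = Nat.card A ^ 3 := by
    simp [Nat.card_fun]
  have h2 : Nat.card {v : Fin 3 → A // ¬∃ i, IsUnit (v i)} =
      Nat.card (Ideal.span {t} : Ideal A) ^ 3 := by
    rw [Nat.card_eq_of_bijective _ e2.bijective]
    simp [Nat.card_fun]
  have hle : Nat.card (Ideal.span {t} : Ideal A) ^ 3 ≤ Nat.card A ^ 3 := by
    exact Nat.pow_le_pow_left (Nat.card_le_card_of_injective _ Subtype.val_injective) 3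
  rw [h1, h2] at hsum
  generalize hN : Nat.card {v : Fin 3 → A // ∃ i, IsUnit (v i)} = N at hsum ⊢
  clear h2 e2 hN
  omega

end Cards

section Specific

lemma card_of_basis {A : Type*} {M : Type*} [CommRing A] [Finite A] [AddCommGroup M] [Module A M]
    {n : ℕ} (b : Module.Basis (Fin n) A M) : Nat.card M = Nat.card A ^ n := by
  have hfin : Module.Finite A M := Module.Finite.of_basis b
  have : Finite M := Module.finite_of_finite A
  cases nonempty_fintype A
  cases nonempty_fintype M
  rw [Nat.card_eq_fintype_card, Nat.card_eq_fintype_card, Module.card_fintype b, Fintype.card_fin]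

lemma ker_castHom_eq (p k : ℕ) (hp : p.Prime) :
    RingHom.ker (ZMod.castHom (dvd_pow_self p (Nat.succ_ne_zero k)) (ZMod p)) =
    Ideal.span {((p : ℕ) : ZMod (p ^ (k + 1)))} := by
  haveI : NeZero (p ^ (k + 1)) := ⟨pow_ne_zero _ hp.ne_zero⟩
  ext x
  obtain ⟨n, rfl⟩ := ZMod.natCast_zmod_surjective x
  simp only [RingHom.mem_ker, map_natCast, Ideal.mem_span_singleton]
  constructor
  · intro h
    obtain ⟨c, rfl⟩ := (ZMod.natCast_eq_zero_iff n p).mp h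
    exact ⟨(c : ZMod (p ^ (k + 1))), by push_cast; ring⟩
  · rintro ⟨c, hc⟩
    obtain ⟨c', rfl⟩ := ZMod.natCast_zmod_surjective c
    rw [show ((p : ZMod (p ^ (k + 1))) * (c' : ZMod (p ^ (k + 1))))
        = ((p * c' : ℕ) : ZMod (p ^ (k + 1))) by push_cast; ring] at hc
    have h1 : n ≡ p * c' [MOD p ^ (k + 1)] := (ZMod.natCast_eq_natCast_iff _ _ _).mp hc
    have h2 : n ≡ p * c' [MOD p] := h1.of_dvd (dvd_pow_self p (Nat.succ_ne_zero k))
    have h3 : p ∣ n := by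
      have hmod : n % p = (p * c') % p := h2
      rw [Nat.mul_mod_right] at hmod
      exact Nat.dvd_of_mod_eq_zero hmod
    exact (ZMod.natCast_eq_zero_iff n p).mpr h3

lemma main_adjoinRoot (p r k : ℕ) (hp : p.Prime) (hr : 0 < r)
    (f : (ZMod (p ^ (k + 1)))[X]) (hf : f.Monic) (hfd : f.natDegree = r)
    (hfi : Irreducible (f.map (ZMod.castHom (dvd_pow_self p (Nat.succ_ne_zero k)) (ZMod p)))) :
    Nat.card {S : Submodule (AdjoinRoot f) (Fin 3 → AdjoinRoot f) //
        Nonempty (S ≃ₗ[AdjoinRoot f] AdjoinRoot f)} =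
      ((p ^ r) ^ 2 + p ^ r + 1) * (p ^ r) ^ (2 * k) := by
  haveI : NeZero (p ^ (k + 1)) := ⟨pow_ne_zero _ hp.ne_zero⟩
  haveI : Fact (1 < p ^ (k + 1)) := ⟨Nat.one_lt_pow (Nat.succ_ne_zero k) hp.one_lt⟩
  haveI : Fact p.Prime := ⟨hp⟩
  set R := AdjoinRoot f with hR
  -- nontrivial / finite
  let b : Module.Basis (Fin r) (ZMod (p ^ (k + 1))) R :=
    (AdjoinRoot.powerBasis' hf).basis.reindex (finCongr (by simp [hfd]))
  haveI : Module.Finite (ZMod (p ^ (k + 1))) R := Module.Finite.of_basis b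
  haveI : Finite R := Module.finite_of_finite (ZMod (p ^ (k + 1)))
  haveI : Nontrivial R := ⟨b ⟨0, hr⟩, 0, b.ne_zero _⟩
  -- nilpotent generator
  set t : R := (p : R) with htdef
  have htm : t ^ (k + 1) = 0 := by
    rw [htdef, ← Nat.cast_pow,
      show ((p ^ (k + 1) : ℕ) : R) = AdjoinRoot.of f ((p ^ (k + 1) : ℕ) : ZMod (p ^ (k + 1))) from
        (map_natCast _ _).symm,
      ZMod.natCast_self, map_zero]
  have ht : IsNilpotent t := ⟨k + 1, htm⟩
  -- the residue field
  set I : Ideal (ZMod (p ^ (k + 1))) := Ideal.span {((p : ℕ) : ZMod (p ^ (k + 1)))} with hIdef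
  set fbar : (ZMod p)[X] :=
    f.map (ZMod.castHom (dvd_pow_self p (Nat.succ_ne_zero k)) (ZMod p)) with hfbar
  have hI : Ideal.span {t} = I.map (AdjoinRoot.of f) := by
    rw [hIdef, Ideal.map_span, Set.image_singleton, map_natCast]
  let e0 : (ZMod (p ^ (k + 1)) ⧸ I) ≃+* ZMod p :=
    (Ideal.quotEquivOfEq (ker_castHom_eq p k hp).symm).trans
      (RingHom.quotientKerEquivOfSurjective (ZMod.ringHom_surjective _))
  have hcomp : (e0 : (ZMod (p ^ (k + 1)) ⧸ I) →+* ZMod p).comp (Ideal.Quotient.mk I) =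
      ZMod.castHom (dvd_pow_self p (Nat.succ_ne_zero k)) (ZMod p) := by
    apply RingHom.ext
    intro x
    simp [e0, RingHom.quotientKerEquivOfSurjective]
    exact RingHom.kerLift_mk _ x
  have hmapf : (f.map (Ideal.Quotient.mk I)).map
      (e0 : (ZMod (p ^ (k + 1)) ⧸ I) →+* ZMod p) = fbar := by
    rw [Polynomial.map_map, hcomp]
  let e2 : ((ZMod (p ^ (k + 1)) ⧸ I)[X] ⧸ Ideal.span {f.map (Ideal.Quotient.mk I)}) ≃+*
      ((ZMod p)[X] ⧸ Ideal.span {fbar}) :=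
    Ideal.quotientEquiv _ (Ideal.span {fbar}) (Polynomial.mapEquiv e0)
      (by rw [Ideal.map_span, Set.image_singleton]
          exact congrArg (fun g => Ideal.span {g}) hmapf.symm)
  let E : (R ⧸ Ideal.span {t}) ≃+* ((ZMod p)[X] ⧸ Ideal.span {fbar}) :=
    ((Ideal.quotEquivOfEq hI).trans
      (AdjoinRoot.quotAdjoinRootEquivQuotPolynomialQuot I f)).trans e2
  -- locality
  haveI hmaxbar : (Ideal.span {fbar}).IsMaximal :=
    PrincipalIdealRing.isMaximal_of_irreducible hfi
  letI : Field ((ZMod p)[X] ⧸ Ideal.span {fbar}) := Ideal.Quotient.field _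
  have hRq : IsField (R ⧸ Ideal.span {t}) := E.toMulEquiv.isField (Field.toIsField _)
  have hmaxt : (Ideal.span {t}).IsMaximal := Ideal.Quotient.maximal_of_isField _ hRq
  have hloc : ∀ x : R, ¬IsUnit x → x ∈ Ideal.span {t} := by
    intro x hx
    obtain ⟨M, hM, hxM⟩ := exists_max_ideal_of_mem_nonunits (mem_nonunits_iff.mpr hx)
    have hpM : t ∈ M := by
      refine hM.isPrime.mem_of_pow_mem (k + 1) ?_
      rw [htm]; exact M.zero_mem
    have hle : Ideal.span {t} ≤ M := (Ideal.span_singleton_le_iff_mem _).mpr hpM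
    rw [← hmaxt.eq_of_le hM.ne_top hle] at hxM
    exact hxM
  -- cardinalities
  have cardR : Nat.card R = (p ^ (k + 1)) ^ r := by
    rw [card_of_basis b, Nat.card_zmod]
  have hfbarm : fbar.Monic := hf.map _
  have hfbard : fbar.natDegree = r := by rw [hfbar, hf.natDegree_map]; exact hfd
  let b2 : Module.Basis (Fin r) (ZMod p) (AdjoinRoot fbar) :=
    (AdjoinRoot.powerBasis' hfbarm).basis.reindex (finCongr (by simp [hfbard]))
  have cardQ : Nat.card (R ⧸ Ideal.span {t}) = p ^ r := by
    rw [Nat.card_congr E.toEquiv]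
    have : Nat.card (AdjoinRoot fbar) = p ^ r := by
      rw [card_of_basis b2, Nat.card_zmod]
    exact this
  have hquot : Nat.card R = Nat.card (R ⧸ Ideal.span {t}) * Nat.card (Ideal.span {t}) :=
    AddSubgroup.card_eq_card_quotient_mul_card_addSubgroup (Ideal.span {t}).toAddSubgroup
  set q : ℕ := p ^ r with hq
  have hq2 : 2 ≤ q := le_trans hp.two_le (Nat.le_self_pow hr.ne' p)
  have cardR' : Nat.card R = q ^ (k + 1) := by
    rw [cardR, hq, ← pow_mul, ← pow_mul, Nat.mul_comm]
  have cardI : Nat.card (Ideal.span {t}) = q ^ k := by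
    have h := hquot
    rw [cardR', cardQ] at h
    have hqr : q ^ (k + 1) = p ^ r * q ^ k := by rw [pow_succ, hq]; ring
    rw [hqr] at h
    have hpos : 0 < p ^ r := Nat.pow_pos hp.pos
    exact (Nat.eq_of_mul_eq_mul_left hpos h.symm)
  -- main counting
  have key := card_free_mul_card_units ht hloc
  rw [card_units_eq ht hloc, card_unimodular_eq ht hloc, cardR', cardI] at key
  obtain ⟨d, hd⟩ : ∃ d, q = d + 1 := ⟨q - 1, by omega⟩
  have h1 : q ^ (k + 1) - q ^ k = q ^ k * d := Nat.sub_eq_of_eq_add (by rw [hd]; ring)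
  have h2 : (q ^ (k + 1)) ^ 3 - (q ^ k) ^ 3 = q ^ (3 * k) * ((q ^ 2 + q + 1) * d) :=
    Nat.sub_eq_of_eq_add (by rw [hd]; ring)
  rw [h1, h2] at key
  have hdpos : 0 < q ^ k * d := by
    have : 1 ≤ d := by omega
    exact Nat.mul_pos (Nat.pow_pos (by omega)) this
  refine Nat.eq_of_mul_eq_mul_right hdpos ?_
  rw [key]
  ring

end Specific

/-- Let `R = GR(q^m, p^m)` be a Galois ring with `q = p^r`, realized as
`Z_{p^m}[X]/(f)` with `f` monic of degree `r` and irreducible mod `p`.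
The number of free rank-1 submodules of `R^3` (the points of `PHG(2,R)`)
equals `(q^2 + q + 1) * q^(2(m-1))`. -/
theorem card_points_PHG (p r m : ℕ) (hp : p.Prime) (hr : 0 < r) (hm : 0 < m)
    (f : (ZMod (p ^ m))[X]) (hf : f.Monic) (hfd : f.natDegree = r)
    (hfi : Irreducible (f.map (ZMod.castHom (dvd_pow_self p hm.ne') (ZMod p)))) :
    Nat.card {S : Submodule ((ZMod (p ^ m))[X] ⧸ Ideal.span {f})
        (Fin 3 → ((ZMod (p ^ m))[X] ⧸ Ideal.span {f})) //
      Nonempty (S ≃ₗ[(ZMod (p ^ m))[X] ⧸ Ideal.span {f}]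
        ((ZMod (p ^ m))[X] ⧸ Ideal.span {f}))} =
    ((p ^ r) ^ 2 + p ^ r + 1) * (p ^ r) ^ (2 * (m - 1)) := by
  obtain ⟨k, rfl⟩ : ∃ k, m = k + 1 := ⟨m - 1, by omega⟩
  have hmain := main_adjoinRoot p r k hp hr f hf hfd hfi
  rw [show (k + 1) - 1 = k from rfl]
  exact hmain
end

section
/- Let R be a Galois ring GR(q^m, p^m) with m ≥ 2. Then there exist two distinct lines of PHG(2, R) (free rank-2 submodules of R^3) whose intersection contains at least two distinct points (free rank-1 submodules of R^3), i.e., PHG(2,R) is not a linear space for m ≥ 2. -/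
open Polynomial

section Aux

variable {R : Type*} [CommRing R]

/-- Span of a unimodular vector is free of rank 1. -/
lemma aux_span_singleton_equiv (v : Fin 3 → R) (i : Fin 3) (hv : v i = 1) :
    Nonempty ((Submodule.span R {v} : Submodule R (Fin 3 → R)) ≃ₗ[R] R) := by
  have hinj : Function.Injective (LinearMap.toSpanSingleton R (Fin 3 → R) v) := by
    intro a b hab
    have := congrFun hab i
    simpa [LinearMap.toSpanSingleton, hv] using this
  exact ⟨(LinearEquiv.ofEq _ _ (LinearMap.span_singleton_eq_range R (Fin 3 → R) v)).trans
    (LinearEquiv.ofInjective _ hinj).symm⟩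

/-- Span of a "triangular" pair is free of rank 2. -/
lemma aux_span_pair_equiv (a b : Fin 3 → R) (ha0 : a 0 = 1) (ha1 : a 1 = 0)
    (hb0 : b 0 = 0) (hb1 : b 1 = 1) :
    Nonempty ((Submodule.span R {a, b} : Submodule R (Fin 3 → R)) ≃ₗ[R] (Fin 2 → R)) := by
  set φ : (Fin 2 → R) →ₗ[R] (Fin 3 → R) :=
    (LinearMap.toSpanSingleton R (Fin 3 → R) a).comp (LinearMap.proj 0) +
      (LinearMap.toSpanSingleton R (Fin 3 → R) b).comp (LinearMap.proj 1) with hφ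
  have hφc : ∀ c : Fin 2 → R, φ c = c 0 • a + c 1 • b := fun c => rfl
  have hinj : Function.Injective φ := by
    rw [injective_iff_map_eq_zero]
    intro c hc
    rw [hφc] at hc
    have h0 := congrFun hc 0
    have h1 := congrFun hc 1
    simp [ha0, ha1, hb0, hb1] at h0 h1
    funext j
    fin_cases j <;> simpa
  have hrange : LinearMap.range φ = Submodule.span R {a, b} := by
    apply le_antisymm
    · rintro x ⟨c, rfl⟩
      rw [hφc]
      exact add_mem (Submodule.smul_mem _ _ (Submodule.subset_span (by simp)))
        (Submodule.smul_mem _ _ (Submodule.subset_span (by simp)))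
    · rw [Submodule.span_le]
      rintro x (rfl | rfl)
      · refine ⟨![1, 0], ?_⟩
        rw [hφc]; simp
      · refine ⟨![0, 1], ?_⟩
        rw [hφc]; simp
  exact ⟨(LinearEquiv.ofEq _ _ hrange.symm).trans (LinearEquiv.ofInjective _ hinj).symm⟩

end Aux

lemma aux_pow_ne_zero (p r m : ℕ) (hp : p.Prime) (hr : 0 < r) (hm : 2 ≤ m)
    (f : (ZMod (p ^ m))[X]) (hf : f.Monic) (hfd : f.natDegree = r) (k : ℕ) (hk : k < m) :
    ((p : (ZMod (p ^ m))[X] ⧸ Ideal.span {f}) ^ k) ≠ 0 := by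
  intro h
  have hne : NeZero (p ^ m) := ⟨pow_ne_zero _ hp.ne_zero⟩
  have hcne : ((p ^ k : ℕ) : ZMod (p ^ m)) ≠ 0 := by
    intro hz
    rw [ZMod.natCast_eq_zero_iff] at hz
    have := (Nat.pow_dvd_pow_iff_le_right hp.one_lt).mp hz
    omega
  have hq : (Ideal.Quotient.mk (Ideal.span {f})) ((p ^ k : ℕ) : (ZMod (p ^ m))[X]) = 0 := by
    rw [map_natCast]
    push_cast
    exact h
  have hmem := Ideal.Quotient.eq_zero_iff_mem.mp hq
  rw [Ideal.mem_span_singleton] at hmem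
  obtain ⟨g, hg⟩ := hmem
  have hgne : g ≠ 0 := by
    rintro rfl
    rw [mul_zero] at hg
    apply hcne
    have := congrArg (Polynomial.eval 0) hg
    simpa using this
  have hdeg := hf.natDegree_mul' hgne
  rw [← hg] at hdeg
  simp only [Polynomial.natDegree_natCast] at hdeg
  omega

set_option maxHeartbeats 1000000 in
/-- For a Galois ring `R = GR(q^m, p^m)` with `m ≥ 2`, the projective Hjelmslev
plane `PHG(2, R)` is not a linear space: there are two distinct lines (free
rank-2 submodules of `R^3`) containing two distinct common points (free rank-1
submodules). -/
theorem PHG_not_linear_space (p r m : ℕ) (hp : p.Prime) (hr : 0 < r) (hm : 2 ≤ m)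
    (f : (ZMod (p ^ m))[X]) (hf : f.Monic) (hfd : f.natDegree = r)
    (hfi : Irreducible (f.map (ZMod.castHom (dvd_pow_self p (by omega : m ≠ 0)) (ZMod p)))) :
    ∃ L₁ L₂ P₁ P₂ : Submodule ((ZMod (p ^ m))[X] ⧸ Ideal.span {f})
        (Fin 3 → ((ZMod (p ^ m))[X] ⧸ Ideal.span {f})),
      Nonempty (L₁ ≃ₗ[(ZMod (p ^ m))[X] ⧸ Ideal.span {f}]
        (Fin 2 → ((ZMod (p ^ m))[X] ⧸ Ideal.span {f}))) ∧
      Nonempty (L₂ ≃ₗ[(ZMod (p ^ m))[X] ⧸ Ideal.span {f}]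
        (Fin 2 → ((ZMod (p ^ m))[X] ⧸ Ideal.span {f}))) ∧
      Nonempty (P₁ ≃ₗ[(ZMod (p ^ m))[X] ⧸ Ideal.span {f}]
        ((ZMod (p ^ m))[X] ⧸ Ideal.span {f})) ∧
      Nonempty (P₂ ≃ₗ[(ZMod (p ^ m))[X] ⧸ Ideal.span {f}]
        ((ZMod (p ^ m))[X] ⧸ Ideal.span {f})) ∧
      L₁ ≠ L₂ ∧ P₁ ≠ P₂ ∧ P₁ ≤ L₁ ∧ P₁ ≤ L₂ ∧ P₂ ≤ L₁ ∧ P₂ ≤ L₂ := by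
  set R := (ZMod (p ^ m))[X] ⧸ Ideal.span {f} with hR
  -- key elements
  have hπ : (p : R) ≠ 0 := by
    have := aux_pow_ne_zero p r m hp hr hm f hf hfd 1 (by omega)
    simpa using this
  have hπm1 : (p : R) ^ (m - 1) ≠ 0 := aux_pow_ne_zero p r m hp hr hm f hf hfd (m - 1) (by omega)
  have hπm : (p : R) ^ m = 0 := by
    have h1 := map_natCast (algebraMap (ZMod (p ^ m)) R) (p ^ m)
    rw [ZMod.natCast_self, map_zero] at h1
    have h2 : ((p ^ m : ℕ) : R) = 0 := h1.symm
    push_cast at h2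
    exact h2
  set v0 : Fin 3 → R := ![1, 0, 0] with hv0
  set v1 : Fin 3 → R := ![0, 1, 0] with hv1
  set w : Fin 3 → R := ![0, 1, (p : R)] with hw
  set u : Fin 3 → R := ![1, (p : R) ^ (m - 1), 0] with hu
  refine ⟨Submodule.span R {v0, v1}, Submodule.span R {v0, w},
    Submodule.span R {v0}, Submodule.span R {u}, ?_, ?_, ?_, ?_, ?_, ?_, ?_, ?_, ?_, ?_⟩
  · exact aux_span_pair_equiv v0 v1 rfl rfl rfl rfl
  · exact aux_span_pair_equiv v0 w rfl rfl rfl rfl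
  · exact aux_span_singleton_equiv v0 0 rfl
  · exact aux_span_singleton_equiv u 0 rfl
  · -- L₁ ≠ L₂
    intro hL
    have hwmem : w ∈ Submodule.span R {v0, v1} := hL ▸ Submodule.subset_span (by simp)
    have hsub : Submodule.span R {v0, v1} ≤
        LinearMap.ker (LinearMap.proj (R := R) (φ := fun _ : Fin 3 => R) 2) := by
      rw [Submodule.span_le]
      intro x hx
      simp only [Set.mem_insert_iff, Set.mem_singleton_iff] at hx
      rcases hx with rfl | rfl <;> simp [LinearMap.mem_ker, hv0, hv1]
    have h2 := hsub hwmem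
    simp only [LinearMap.mem_ker, LinearMap.proj_apply, hw] at h2
    exact hπ (by simpa using h2)
  · -- P₁ ≠ P₂
    intro hP
    have humem : u ∈ Submodule.span R {v0} := hP ▸ Submodule.subset_span (by simp)
    have hsub : Submodule.span R {v0} ≤
        LinearMap.ker (LinearMap.proj (R := R) (φ := fun _ : Fin 3 => R) 1) := by
      rw [Submodule.span_le]
      intro x hx
      simp only [Set.mem_singleton_iff] at hx
      subst hx
      simp [LinearMap.mem_ker, hv0]
    have h2 := hsub humem
    simp only [LinearMap.mem_ker, LinearMap.proj_apply, hu, Matrix.cons_val_one,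
      Matrix.head_cons] at h2
    exact hπm1 h2
  · exact Submodule.span_mono (by intro x hx; simp only [Set.mem_singleton_iff] at hx; simp [hx])
  · exact Submodule.span_mono (by intro x hx; simp only [Set.mem_singleton_iff] at hx; simp [hx])
  · -- P₂ ≤ L₁
    rw [Submodule.span_le]
    intro x hx
    simp only [Set.mem_singleton_iff] at hx
    subst hx
    have heq : u = v0 + (p : R) ^ (m - 1) • v1 := by
      funext j
      fin_cases j <;> simp [hu, hv0, hv1]
    rw [heq]
    exact add_mem (Submodule.subset_span (by simp))
      (Submodule.smul_mem _ _ (Submodule.subset_span (by simp)))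
  · -- P₂ ≤ L₂
    rw [Submodule.span_le]
    intro x hx
    simp only [Set.mem_singleton_iff] at hx
    subst hx
    have hkey : (p : R) ^ (m - 1) * (p : R) = 0 := by
      rw [← pow_succ]
      have h' : m - 1 + 1 = m := by omega
      rw [h', hπm]
    have heq : u = v0 + (p : R) ^ (m - 1) • w := by
      funext j
      fin_cases j
      · simp [hu, hv0, hw]
      · simp [hu, hv0, hw]
      · simp [hu, hv0, hw, hkey]
    rw [heq]
    exact add_mem (Submodule.subset_span (by simp))
      (Submodule.smul_mem _ _ (Submodule.subset_span (by simp)))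
end
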